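/- Let n ∈ ℕ, λ > 0, L ≥ 0, M_F > 0, M_ℓ > 0, M_V > 0, T̄ > 0, C_T > 0 and C_V > 0. Then there exists C > 0, depending only on these constants, with the following property. Let U and V be measurable spaces, u : [0,∞) → U and v : [0,∞) → V Lebesgue-measurable controls, ℓ : ℝ^{n+1} × U × V → ℝ with |ℓ| ≤ M_ℓ and |ℓ(w,a,b) − ℓ(w',a,b)| ≤ L‖w − w'‖ for all w, w', a, b, and V̂ : ℝ^{n+1} → ℝ with |V̂| ≤ M_V and |V̂(w) − V̂(w')| ≤ C_V‖w − w'‖ for all w, w'. Let z, z' ∈ ℝ^{n+1} and let Z, Z' : [0,∞) → ℝ^{n+1} be trajectories with Z_0 = z and Z'_0 = z' such that t ↦ ℓ(Z_t,u(t),v(t)) and t ↦ ℓ(Z'_t,u(t),v(t)) are Lebesgue measurable, ‖Z_t − Z'_t‖ ≤ e^{Lt}‖z − z'‖ for all t ≥ 0, and ‖Z_t − Z_s‖ ≤ M_F|t − s| and ‖Z'_t − Z'_s‖ ≤ M_F|t − s| for all s, t ≥ 0. Let T, T' ∈ [0, T̄] with |T − T'| ≤ C_T‖z − z'‖. Then |(∫₀^T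 e^{−λt} ℓ(Z_t,u(t),v(t)) dt + e^{−λT} V̂(Z_T)) − (∫₀^{T'} e^{−λt} ℓ(Z'_t,u(t),v(t)) dt + e^{−λT'} V̂(Z'_{T'}))| ≤ C‖z − z'‖. -/

import Mathlib

open MeasureTheory Set

noncomputable section

abbrev Euc (n : ℕ) : Type := EuclideanSpace ℝ (Fin (n + 1))

private lemma bdd_intervalIntegrable {h : ℝ → ℝ} (hm : Measurable h) {M a b : ℝ}
    (hb : ∀ t ∈ Set.uIoc a b, |h t| ≤ M) : IntervalIntegrable h volume a b := by
  apply IntervalIntegrable.mono_fun' (g := fun _ => M) intervalIntegrable_const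
    hm.aestronglyMeasurable.restrict
  exact (ae_restrict_iff' measurableSet_uIoc).2
    (Filter.Eventually.of_forall fun t ht => by simpa using hb t ht)

private lemma exp_lip {lam : ℝ} (hlam : 0 < lam) {a b : ℝ} (ha : 0 ≤ a) (hb : 0 ≤ b) :
    |Real.exp (-lam * a) - Real.exp (-lam * b)| ≤ lam * |a - b| := by
  wlog hab : b ≤ a generalizing a b
  · rw [abs_sub_comm, abs_sub_comm a b]; exact this hb ha (le_of_not_ge hab)
  have h1 : Real.exp (-lam * a) ≤ Real.exp (-lam * b) := by
    apply Real.exp_le_exp.2; nlinarith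
  rw [abs_sub_comm, abs_of_nonneg (by linarith), abs_of_nonneg (by linarith)]
  have key : Real.exp (-lam * b) - Real.exp (-lam * a) =
      Real.exp (-lam * b) * (1 - Real.exp (-lam * (a - b))) := by
    rw [mul_sub, mul_one, ← Real.exp_add]; ring_nf
  rw [key]
  have h2 : Real.exp (-lam * b) ≤ 1 := Real.exp_le_one_iff.2 (by nlinarith)
  have h3 : 1 - Real.exp (-lam * (a - b)) ≤ lam * (a - b) := by
    have := Real.add_one_le_exp (-lam * (a - b)); linarith
  have h4 : 0 ≤ 1 - Real.exp (-lam * (a - b)) := by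
    have : Real.exp (-lam * (a - b)) ≤ 1 := Real.exp_le_one_iff.2 (by nlinarith)
    linarith
  nlinarith

set_option maxHeartbeats 1000000 in
/-- Lipschitz continuity in the initial state of the auxiliary cost
consisting of a running cost up to a stopping time and a terminal value. -/
theorem auxiliary_cost_lipschitz_continuity
    (n : ℕ) (lam L MF Ml MV Tbar CT CV : ℝ)
    (hlam : 0 < lam) (hL : 0 ≤ L) (hMF : 0 < MF) (hMl : 0 < Ml) (hMV : 0 < MV)
    (hTbar : 0 < Tbar) (hCT : 0 < CT) (hCV : 0 < CV) :
    ∃ C : ℝ, 0 < C ∧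
      ∀ (U V : Type) [MeasurableSpace U] [MeasurableSpace V]
        (u : ℝ → U) (v : ℝ → V), Measurable u → Measurable v →
        ∀ l : Euc n → U → V → ℝ,
          (∀ w a b, |l w a b| ≤ Ml) →
          (∀ w w' a b, |l w a b - l w' a b| ≤ L * ‖w - w'‖) →
        ∀ Vh : Euc n → ℝ,
          (∀ w, |Vh w| ≤ MV) →
          (∀ w w', |Vh w - Vh w'| ≤ CV * ‖w - w'‖) →
        ∀ (z z' : Euc n) (Z Z' : ℝ → Euc n), Z 0 = z → Z' 0 = z' →
          Measurable (fun t => l (Z t) (u t) (v t)) →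
          Measurable (fun t => l (Z' t) (u t) (v t)) →
          (∀ t : ℝ, 0 ≤ t → ‖Z t - Z' t‖ ≤ Real.exp (L * t) * ‖z - z'‖) →
          (∀ s t : ℝ, 0 ≤ s → 0 ≤ t → ‖Z t - Z s‖ ≤ MF * |t - s|) →
          (∀ s t : ℝ, 0 ≤ s → 0 ≤ t → ‖Z' t - Z' s‖ ≤ MF * |t - s|) →
        ∀ T T' : ℝ, T ∈ Icc (0 : ℝ) Tbar → T' ∈ Icc (0 : ℝ) Tbar →
          |T - T'| ≤ CT * ‖z - z'‖ →
          |((∫ t in (0 : ℝ)..T, Real.exp (-lam * t) * l (Z t) (u t) (v t)) +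
                Real.exp (-lam * T) * Vh (Z T)) -
              ((∫ t in (0 : ℝ)..T', Real.exp (-lam * t) * l (Z' t) (u t) (v t)) +
                Real.exp (-lam * T') * Vh (Z' T'))| ≤
            C * ‖z - z'‖ := by
  refine ⟨Tbar * (L * Real.exp (L * Tbar)) + Ml * CT + lam * CT * MV +
      CV * (Real.exp (L * Tbar) + MF * CT) + 1, by positivity, ?_⟩
  intro U V _ _ u v hu hv l hlb hll Vh hVb hVl z z' Z Z' hZ0 hZ'0 hml hml' hZZ' hZlip hZ'lip
    T T' hT hT' hTT'
  set δ := ‖z - z'‖ with hδdef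
  have hδ : 0 ≤ δ := norm_nonneg _
  obtain ⟨hT0, hTb⟩ := hT
  obtain ⟨hT'0, hT'b⟩ := hT'
  set f : ℝ → ℝ := fun t => Real.exp (-lam * t) * l (Z t) (u t) (v t) with hf
  set g : ℝ → ℝ := fun t => Real.exp (-lam * t) * l (Z' t) (u t) (v t) with hg
  have hexp1 : ∀ t : ℝ, 0 ≤ t → Real.exp (-lam * t) ≤ 1 := fun t ht =>
    Real.exp_le_one_iff.2 (by nlinarith)
  have hfmeas : Measurable f := ((measurable_const.mul measurable_id).exp).mul hml
  have hgmeas : Measurable g := ((measurable_const.mul measurable_id).exp).mul hml'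
  -- pointwise bounds on nonnegative times
  have hfb : ∀ t : ℝ, 0 ≤ t → |f t| ≤ Ml := by
    intro t ht
    rw [hf, abs_mul, Real.abs_exp]
    have h1 := hexp1 t ht
    have h2 := hlb (Z t) (u t) (v t)
    nlinarith [Real.exp_pos (-lam * t), abs_nonneg (l (Z t) (u t) (v t))]
  have hgb : ∀ t : ℝ, 0 ≤ t → |g t| ≤ Ml := by
    intro t ht
    rw [hg, abs_mul, Real.abs_exp]
    have h1 := hexp1 t ht
    have h2 := hlb (Z' t) (u t) (v t)
    nlinarith [Real.exp_pos (-lam * t), abs_nonneg (l (Z' t) (u t) (v t))]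
  have huIoc_nonneg : ∀ a b : ℝ, 0 ≤ a → 0 ≤ b → ∀ t ∈ Set.uIoc a b, (0:ℝ) ≤ t := by
    intro a b ha hb t ht
    rcases ht with ⟨h1, _⟩
    have : min a b ≤ max a b := min_le_max
    have := le_min ha hb
    linarith [h1]
  have hfint : IntervalIntegrable f volume 0 T :=
    bdd_intervalIntegrable hfmeas fun t ht => hfb t (huIoc_nonneg 0 T le_rfl hT0 t ht)
  have hgintT : IntervalIntegrable g volume 0 T :=
    bdd_intervalIntegrable hgmeas fun t ht => hgb t (huIoc_nonneg 0 T le_rfl hT0 t ht)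
  have hgintT' : IntervalIntegrable g volume 0 T' :=
    bdd_intervalIntegrable hgmeas fun t ht => hgb t (huIoc_nonneg 0 T' le_rfl hT'0 t ht)
  set E := Real.exp (L * Tbar) with hE
  have hE1 : (1:ℝ) ≤ E := Real.one_le_exp (by positivity)
  -- bound A
  have hA : |∫ t in (0:ℝ)..T, (f t - g t)| ≤ (L * E * δ) * Tbar := by
    have hb : ∀ t ∈ Set.uIoc (0:ℝ) T, ‖f t - g t‖ ≤ L * E * δ := by
      intro t ht
      have ht0 : (0:ℝ) ≤ t := huIoc_nonneg 0 T le_rfl hT0 t ht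
      have htT : t ≤ Tbar := by
        rcases ht with ⟨_, h2⟩
        have : max 0 T ≤ Tbar := max_le hTbar.le hTb
        linarith [h2.trans this]
      have h1 : |f t - g t| = Real.exp (-lam * t) * |l (Z t) (u t) (v t) - l (Z' t) (u t) (v t)| := by
        rw [hf, hg]
        rw [← mul_sub, abs_mul, Real.abs_exp]
      rw [Real.norm_eq_abs, h1]
      have h2 := hll (Z t) (Z' t) (u t) (v t)
      have h3 := hZZ' t ht0
      have h4 : Real.exp (L * t) ≤ E := Real.exp_le_exp.2 (by nlinarith)
      have h5 := hexp1 t ht0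
      have hep := Real.exp_pos (-lam * t)
      have habs : |l (Z t) (u t) (v t) - l (Z' t) (u t) (v t)| ≤ L * E * δ := by
        calc |l (Z t) (u t) (v t) - l (Z' t) (u t) (v t)| ≤ L * ‖Z t - Z' t‖ := h2
          _ ≤ L * (Real.exp (L * t) * δ) := by
              apply mul_le_mul_of_nonneg_left h3 hL
          _ ≤ L * E * δ := by
              have h6 := mul_le_mul_of_nonneg_right h4 hδ
              nlinarith
      nlinarith [abs_nonneg (l (Z t) (u t) (v t) - l (Z' t) (u t) (v t))]
    have := intervalIntegral.norm_integral_le_of_norm_le_const hb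
    rw [Real.norm_eq_abs] at this
    have hTabs : |T - 0| ≤ Tbar := by rw [sub_zero, abs_of_nonneg hT0]; exact hTb
    have hLE : 0 ≤ L * E * δ := by positivity
    nlinarith
  -- bound B
  have hB : |∫ t in T'..T, g t| ≤ Ml * (CT * δ) := by
    have hb : ∀ t ∈ Set.uIoc T' T, ‖g t‖ ≤ Ml := by
      intro t ht
      rw [Real.norm_eq_abs]
      exact hgb t (huIoc_nonneg T' T hT'0 hT0 t ht)
    have := intervalIntegral.norm_integral_le_of_norm_le_const hb
    rw [Real.norm_eq_abs] at this
    have h2 : |T - T'| ≤ CT * δ := hTT'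
    nlinarith
  -- bound terminal term
  have hD : |Real.exp (-lam * T) * Vh (Z T) - Real.exp (-lam * T') * Vh (Z' T')| ≤
      lam * (CT * δ) * MV + CV * (E * δ + MF * (CT * δ)) := by
    have key : Real.exp (-lam * T) * Vh (Z T) - Real.exp (-lam * T') * Vh (Z' T') =
        (Real.exp (-lam * T) - Real.exp (-lam * T')) * Vh (Z T) +
        Real.exp (-lam * T') * (Vh (Z T) - Vh (Z' T')) := by ring
    rw [key]
    have h1 : |(Real.exp (-lam * T) - Real.exp (-lam * T')) * Vh (Z T)| ≤ lam * (CT * δ) * MV := by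
      rw [abs_mul]
      have ha := exp_lip hlam hT0 hT'0
      have hb := hVb (Z T)
      have h0 : |Real.exp (-lam * T) - Real.exp (-lam * T')| ≤ lam * (CT * δ) := by
        calc |Real.exp (-lam * T) - Real.exp (-lam * T')| ≤ lam * |T - T'| := ha
          _ ≤ lam * (CT * δ) := by nlinarith
      nlinarith [abs_nonneg (Real.exp (-lam * T) - Real.exp (-lam * T')),
        abs_nonneg (Vh (Z T))]
    have h2 : |Real.exp (-lam * T') * (Vh (Z T) - Vh (Z' T'))| ≤
        CV * (E * δ + MF * (CT * δ)) := by
      rw [abs_mul, Real.abs_exp]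
      have he := hexp1 T' hT'0
      have hVd := hVl (Z T) (Z' T')
      have hnorm : ‖Z T - Z' T'‖ ≤ E * δ + MF * (CT * δ) := by
        have h3 : ‖Z T - Z' T'‖ ≤ ‖Z T - Z' T‖ + ‖Z' T - Z' T'‖ := by
          have := norm_sub_le_norm_sub_add_norm_sub (Z T) (Z' T) (Z' T')
          linarith [this]
        have h4 := hZZ' T hT0
        have h5 := hZ'lip T' T hT'0 hT0
        have h6 : Real.exp (L * T) ≤ E := Real.exp_le_exp.2 (by nlinarith)
        have h7 : MF * |T - T'| ≤ MF * (CT * δ) := by nlinarith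
        nlinarith
      have h8 : |Vh (Z T) - Vh (Z' T')| ≤ CV * (E * δ + MF * (CT * δ)) := by nlinarith
      nlinarith [Real.exp_pos (-lam * T'), abs_nonneg (Vh (Z T) - Vh (Z' T'))]
    calc |(Real.exp (-lam * T) - Real.exp (-lam * T')) * Vh (Z T) +
        Real.exp (-lam * T') * (Vh (Z T) - Vh (Z' T'))| ≤
        |(Real.exp (-lam * T) - Real.exp (-lam * T')) * Vh (Z T)| +
        |Real.exp (-lam * T') * (Vh (Z T) - Vh (Z' T'))| := abs_add_le _ _
      _ ≤ lam * (CT * δ) * MV + CV * (E * δ + MF * (CT * δ)) := add_le_add h1 h2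
  -- assemble
  have hsplit : ((∫ t in (0:ℝ)..T, f t) + Real.exp (-lam * T) * Vh (Z T)) -
      ((∫ t in (0:ℝ)..T', g t) + Real.exp (-lam * T') * Vh (Z' T')) =
      (∫ t in (0:ℝ)..T, (f t - g t)) + (∫ t in T'..T, g t) +
      (Real.exp (-lam * T) * Vh (Z T) - Real.exp (-lam * T') * Vh (Z' T')) := by
    have hBsub := intervalIntegral.integral_interval_sub_left hgintT hgintT'
    rw [intervalIntegral.integral_sub hfint hgintT, ← hBsub]
    ring
  calc |((∫ t in (0:ℝ)..T, f t) + Real.exp (-lam * T) * Vh (Z T)) -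
      ((∫ t in (0:ℝ)..T', g t) + Real.exp (-lam * T') * Vh (Z' T'))|
      = |(∫ t in (0:ℝ)..T, (f t - g t)) + (∫ t in T'..T, g t) +
        (Real.exp (-lam * T) * Vh (Z T) - Real.exp (-lam * T') * Vh (Z' T'))| := by
        rw [hsplit]
    _ ≤ |∫ t in (0:ℝ)..T, (f t - g t)| + |∫ t in T'..T, g t| +
        |Real.exp (-lam * T) * Vh (Z T) - Real.exp (-lam * T') * Vh (Z' T')| :=
        (abs_add_le _ _).trans (add_le_add_left (abs_add_le _ _) _)
    _ ≤ (L * E * δ) * Tbar + Ml * (CT * δ) +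
        (lam * (CT * δ) * MV + CV * (E * δ + MF * (CT * δ))) :=
        add_le_add (add_le_add hA hB) hD
    _ ≤ (Tbar * (L * E) + Ml * CT + lam * CT * MV + CV * (E + MF * CT) + 1) * δ := by
        nlinarith
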